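/- For every graph G with m = sum over v of binom(deg(v),2), the geometric pseudoachromatic index satisfies psi_g(G) ≤ floor((1 + sqrt(1 + 8(m + rcr(G))))/2), where rcr(G) is the rectilinear crossing number of G. -/
import Mathlib


open scoped Classical

abbrev Pt : Type := ℝ × ℝ

/-- No three distinct points of `S` are collinear. -/
def GenPos (S : Finset Pt) : Prop :=
  ∀ p ∈ S, ∀ q ∈ S, ∀ r ∈ S, p ≠ q → q ≠ r → p ≠ r → ¬ Collinear ℝ ({p, q, r} : Set Pt)

/-- The closed straight-line segment of an (unordered) edge. -/
noncomputable def seg2 : Sym2 Pt → Set Pt :=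
  Sym2.lift ⟨fun p q => segment ℝ p q, fun p q => segment_symm ℝ p q⟩

/-- Two edges intersect: they share a point (common endpoint or crossing). -/
def SInter (e f : Sym2 Pt) : Prop := (seg2 e ∩ seg2 f).Nonempty

/-- A geometric graph: vertices in general position, straight-line edges. -/
structure GeomGraph where
  verts : Finset Pt
  edges : Finset (Sym2 Pt)
  genpos : GenPos verts
  edge_mem : ∀ e ∈ edges, ∀ p ∈ e, p ∈ verts
  edge_ne : ∀ e ∈ edges, ¬ e.IsDiag

/-- A coloring is complete on edge set `E` if every pair of used colors appears
on a pair of intersecting edges. -/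
def CompleteOn (E : Finset (Sym2 Pt)) (c : Sym2 Pt → ℕ) : Prop :=
  ∀ i ∈ E.image c, ∀ j ∈ E.image c, i ≠ j →
    ∃ e ∈ E, ∃ f ∈ E, c e = i ∧ c f = j ∧ SInter e f

/-- A coloring is proper if same-colored edges are disjoint. -/
def ProperOn (E : Finset (Sym2 Pt)) (c : Sym2 Pt → ℕ) : Prop :=
  ∀ e ∈ E, ∀ f ∈ E, e ≠ f → c e = c f → ¬ SInter e f

/-- Points in convex position. -/
def ConvexPos (S : Finset Pt) : Prop :=
  ∀ p ∈ S, p ∉ convexHull ℝ ((S : Set Pt) \ {p})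

/-- Edge set of the complete geometric graph on `S`. -/
noncomputable def edgeSet (S : Finset Pt) : Finset (Sym2 Pt) :=
  S.sym2.filter (fun e => ¬ e.IsDiag)

def ShareEndpoint (e f : Sym2 Pt) : Prop := ∃ p : Pt, p ∈ e ∧ p ∈ f

def Crossing (e f : Sym2 Pt) : Prop := SInter e f ∧ ¬ ShareEndpoint e f

/-- Number of unordered pairs of distinct edges of `E` satisfying the
(symmetric) relation `P`. -/
noncomputable def pairCount (E : Finset (Sym2 Pt)) (P : Sym2 Pt → Sym2 Pt → Prop) : ℕ :=
  ((E ×ˢ E).filter (fun q => q.1 ≠ q.2 ∧ P q.1 q.2)).card / 2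

/-- The `k`-th vertex (clockwise) of the regular `n`-gon. -/
noncomputable def pt (n k : ℕ) : Pt :=
  (Real.cos (2 * Real.pi * k / n), -Real.sin (2 * Real.pi * k / n))

/-- Vertex set of the regular `n`-gon. -/
noncomputable def ngon (n : ℕ) : Finset Pt := (Finset.range n).image (pt n)

/-- `pq` is a halving edge of `S`: each open half-plane bounded by the line
through `p` and `q` contains at least `⌊(n-2)/2⌋` points of `S`. -/
def IsHalvingPts (S : Finset Pt) (p q : Pt) : Prop :=
  (S.card - 2) / 2 ≤ (S.filter (fun r =>
      0 < (q.1 - p.1) * (r.2 - p.2) - (q.2 - p.2) * (r.1 - p.1))).card ∧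
  (S.card - 2) / 2 ≤ (S.filter (fun r =>
      (q.1 - p.1) * (r.2 - p.2) - (q.2 - p.2) * (r.1 - p.1) < 0)).card

/-- The edge `e_{i,j}` of the regular `n`-gon is halving. -/
def Halving (n i j : ℕ) : Prop := IsHalvingPts (ngon n) (pt n i) (pt n j)

/-- The edges `e_{i,j}` and `e_{i',j'}` of the regular `n`-gon intersect. -/
def EInter (n i j i' j' : ℕ) : Prop :=
  (segment ℝ (pt n i) (pt n j) ∩ segment ℝ (pt n i') (pt n j')).Nonempty

/-- `(e_{i,j}, e_{j+1,k})` is a halving pair. -/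
def HalvingPair (n i j k : ℕ) : Prop :=
  pt n i ≠ pt n j ∧ pt n (j + 1) ≠ pt n k ∧ ¬ EInter n i j (j + 1) k ∧
  (Halving n i (j + 1) ∨ Halving n i k ∨ Halving n j k)

/-- A geometric embedding of an abstract graph: an injective placement of the vertices in
general position. -/
def IsEmb {V : Type} [Fintype V] (f : V → Pt) : Prop :=
  Function.Injective f ∧ GenPos (Finset.univ.image f)

/-- The straight-line edges of the embedded graph. -/
noncomputable def geomEdges {V : Type} [Fintype V] [DecidableEq V] (G : SimpleGraph V)
    [DecidableRel G.Adj] (f : V → Pt) : Finset (Sym2 Pt) :=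
  G.edgeFinset.image (Sym2.map f)

/-- The rectilinear crossing number of `G`: the minimum number of crossing pairs of edges
over all geometric embeddings. -/
noncomputable def rcr {V : Type} [Fintype V] [DecidableEq V] (G : SimpleGraph V)
    [DecidableRel G.Adj] : ℕ :=
  sInf {m : ℕ | ∃ f : V → Pt, IsEmb f ∧ pairCount (geomEdges G f) Crossing = m}

/- ---------- Auxiliary lemmas ---------- -/

lemma even_card_of_invol {α : Type*} [DecidableEq α] :
    ∀ (s : Finset α) (i : α → α),
    (∀ a ∈ s, i a ∈ s) → (∀ a ∈ s, i (i a) = a) → (∀ a ∈ s, i a ≠ a) → Even s.card := by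
  intro s
  induction s using Finset.strongInduction with
  | _ s ih =>
    intro i hmem hinv hne
    rcases s.eq_empty_or_nonempty with rfl | ⟨a, ha⟩
    · simp
    · have hia : i a ∈ s := hmem a ha
      have hnea : i a ≠ a := hne a ha
      set s' := (s.erase a).erase (i a) with hs'
      have hsub : s' ⊆ s := fun b hb =>
        Finset.mem_of_mem_erase (Finset.mem_of_mem_erase hb)
      have hss : s' ⊂ s := by
        refine Finset.ssubset_iff_of_subset hsub |>.2 ⟨a, ha, ?_⟩
        simp [hs', hnea.symm]
      have hmem' : ∀ b ∈ s', i b ∈ s' := by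
        intro b hb
        have hbs : b ∈ s := hsub hb
        have hb1 : b ≠ i a := Finset.ne_of_mem_erase hb
        have hb2 : b ≠ a := Finset.ne_of_mem_erase (Finset.mem_of_mem_erase hb)
        refine Finset.mem_erase.2 ⟨?_, Finset.mem_erase.2 ⟨?_, hmem b hbs⟩⟩
        · intro h; exact hb2 (by rw [← hinv b hbs, h, hinv a ha])
        · intro h; exact hb1 (by rw [← hinv b hbs, h])
      have hcard : s.card = s'.card + 2 := by
        have h1 : (s.erase a).card = s.card - 1 := Finset.card_erase_of_mem ha
        have h2 : s'.card = (s.erase a).card - 1 :=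
          Finset.card_erase_of_mem (Finset.mem_erase.2 ⟨hnea, hia⟩)
        have h3 : 1 < s.card := Finset.one_lt_card.2 ⟨a, ha, i a, hia, hnea.symm⟩
        omega
      have : Even s'.card :=
        ih s' hss i hmem' (fun b hb => hinv b (hsub hb)) (fun b hb => hne b (hsub hb))
      rw [hcard]
      exact this.add even_two

lemma SInter.symm' {e f : Sym2 Pt} (h : SInter e f) : SInter f e := by
  unfold SInter at *
  rwa [Set.inter_comm]

lemma ShareEndpoint.symm' {e f : Sym2 Pt} (h : ShareEndpoint e f) : ShareEndpoint f e := by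
  obtain ⟨p, h1, h2⟩ := h; exact ⟨p, h2, h1⟩

lemma Crossing.symm' {e f : Sym2 Pt} (h : Crossing e f) : Crossing f e :=
  ⟨h.1.symm', fun hs => h.2 hs.symm'⟩

lemma parabola_genpos (S : Finset Pt) (h : ∀ p ∈ S, p.2 = p.1 ^ 2) : GenPos S := by
  intro p hp q hq r hr hpq hqr hpr hcol
  rw [collinear_iff_of_mem (Set.mem_insert p _)] at hcol
  obtain ⟨v, hv⟩ := hcol
  obtain ⟨cq, hcq⟩ := hv q (by simp)
  obtain ⟨cr, hcr⟩ := hv r (by simp)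
  have hq1 : q.1 - p.1 = cq * v.1 := by rw [hcq]; simp [Prod.smul_fst]
  have hq2 : q.2 - p.2 = cq * v.2 := by rw [hcq]; simp [Prod.smul_snd]
  have hr1 : r.1 - p.1 = cr * v.1 := by rw [hcr]; simp [Prod.smul_fst]
  have hr2 : r.2 - p.2 = cr * v.2 := by rw [hcr]; simp [Prod.smul_snd]
  have hdet : (q.1 - p.1) * (r.2 - p.2) - (q.2 - p.2) * (r.1 - p.1) = 0 := by
    rw [hq1, hq2, hr1, hr2]; ring
  have hps := h p hp
  have hqs := h q hq
  have hrs := h r hr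
  have hab : p.1 ≠ q.1 := by
    intro hh; exact hpq (Prod.ext hh (by rw [hps, hqs, hh]))
  have hbc : q.1 ≠ r.1 := by
    intro hh; exact hqr (Prod.ext hh (by rw [hqs, hrs, hh]))
  have hac : p.1 ≠ r.1 := by
    intro hh; exact hpr (Prod.ext hh (by rw [hps, hrs, hh]))
  have hzero : (q.1 - p.1) * (r.1 - p.1) * (r.1 - q.1) = 0 := by
    have := hdet
    rw [hps, hqs, hrs] at this
    nlinarith [this]
  rcases mul_eq_zero.1 hzero with hz | hz
  · rcases mul_eq_zero.1 hz with hz' | hz'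
    · exact hab (by linarith [sub_eq_zero.1 hz'])
    · exact hac (by linarith [sub_eq_zero.1 hz'])
  · exact hbc (by linarith [sub_eq_zero.1 hz])

noncomputable def parab (V : Type) [Fintype V] : V → Pt :=
  fun v => (((Fintype.equivFin V v : ℕ) : ℝ), ((Fintype.equivFin V v : ℕ) : ℝ) ^ 2)

lemma parab_emb (V : Type) [Fintype V] : IsEmb (parab V) := by
  have hx : Function.Injective (fun v : V => ((Fintype.equivFin V v : ℕ) : ℝ)) := by
    intro a b hab
    exact (Fintype.equivFin V).injective (Fin.ext (Nat.cast_injective hab))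
  constructor
  · intro a b hab
    exact hx (congrArg Prod.fst hab)
  · apply parabola_genpos
    intro p hp
    simp only [Finset.mem_image] at hp
    obtain ⟨v, _, rfl⟩ := hp
    rfl

lemma rcr_attained {V : Type} [Fintype V] [DecidableEq V] (G : SimpleGraph V)
    [DecidableRel G.Adj] :
    ∃ f : V → Pt, IsEmb f ∧ pairCount (geomEdges G f) Crossing = rcr G := by
  have hne : {m : ℕ | ∃ f : V → Pt, IsEmb f ∧ pairCount (geomEdges G f) Crossing = m}.Nonempty :=
    ⟨_, parab V, parab_emb V, rfl⟩
  exact Nat.sInf_mem hne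

lemma two_mul_choose_two (d : ℕ) : 2 * d.choose 2 = d * (d - 1) := by
  rw [Nat.choose_two_right]
  have h : 2 ∣ d * (d - 1) := by
    rcases d with _ | n
    · simp
    · have := (Nat.even_mul_succ_self n).two_dvd
      simpa [Nat.succ_sub_one, Nat.mul_comm] using this
  omega

/-- `ψ_g(G) ≤ ⌊(1 + √(1 + 8(m + rcr(G))))/2⌋` with `m = Σ_v C(deg v, 2)`: some geometric
embedding admits no complete coloring with more colors than this bound. -/
theorem geometric_pseudoachromatic_upper {V : Type} [Fintype V] [DecidableEq V]
    (G : SimpleGraph V) [DecidableRel G.Adj] :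
    ∃ f : V → Pt, IsEmb f ∧
      ∀ c : Sym2 Pt → ℕ, CompleteOn (geomEdges G f) c →
        ((geomEdges G f).image c).card ≤
          Nat.floor ((1 + Real.sqrt (1 + 8 *
            (((∑ v : V, (G.degree v).choose 2) + rcr G : ℕ) : ℝ))) / 2) := by
  obtain ⟨f, hf, hcross⟩ := rcr_attained G
  refine ⟨f, hf, ?_⟩
  intro c hc
  set E := geomEdges G f with hE
  set C := E.image c with hC
  set k := C.card with hk
  set M : ℕ := (∑ v : V, (G.degree v).choose 2) + rcr G with hM
  -- the set of ordered pairs of distinct intersecting edges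
  set T := (E ×ˢ E).filter (fun q => q.1 ≠ q.2 ∧ SInter q.1 q.2) with hT
  have key : k * (k - 1) ≤ 2 * M := by
    -- Step 1 : k*(k-1) ≤ T.card
    have step1 : C.offDiag ⊆ T.image (fun q => (c q.1, c q.2)) := by
      rintro ⟨i, j⟩ hij
      rw [Finset.mem_offDiag] at hij
      obtain ⟨hi, hj, hne⟩ := hij
      obtain ⟨e, he, g, hg, hce, hcg, hint⟩ := hc i hi j hj hne
      refine Finset.mem_image.2 ⟨(e, g), ?_, by simp [hce, hcg]⟩
      refine Finset.mem_filter.2 ⟨Finset.mem_product.2 ⟨he, hg⟩, fun h => hne ?_, hint⟩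
      simpa [hce, hcg] using congrArg c h
    have hkk : k * (k - 1) ≤ T.card := by
      have h1 : C.offDiag.card = k * k - k := Finset.offDiag_card C
      have h2 : C.offDiag.card ≤ T.card :=
        le_trans (Finset.card_le_card step1) Finset.card_image_le
      have h3 : k * (k - 1) = k * k - k := by
        cases k with
        | zero => simp
        | succ n => simp [Nat.succ_sub_one, Nat.mul_sub, Nat.mul_succ]
      omega
    -- Step 2 : split T into sharing pairs and crossing pairs
    set Tsh := T.filter (fun q => ShareEndpoint q.1 q.2) with hTsh
    set Tcr := T.filter (fun q => ¬ ShareEndpoint q.1 q.2) with hTcr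
    have hsplit : Tsh.card + Tcr.card = T.card :=
      Finset.card_filter_add_card_filter_not _
    -- Step 3 : crossing pairs
    have hTcr_eq : Tcr = (E ×ˢ E).filter (fun q => q.1 ≠ q.2 ∧ Crossing q.1 q.2) := by
      rw [hTcr, hT, Finset.filter_filter]
      apply Finset.filter_congr
      intro q _
      simp only [Crossing]
      tauto
    have heven : Even Tcr.card := by
      apply even_card_of_invol Tcr Prod.swap
      · intro a ha
        rw [hTcr_eq] at ha ⊢
        rw [Finset.mem_filter, Finset.mem_product] at ha ⊢
        exact ⟨⟨ha.1.2, ha.1.1⟩, Ne.symm ha.2.1, ha.2.2.symm'⟩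
      · intro a _; exact Prod.swap_swap a
      · intro a ha
        rw [hTcr_eq, Finset.mem_filter] at ha
        intro h
        exact ha.2.1 ((Prod.ext_iff.1 h).1).symm
    have hcr : Tcr.card = 2 * rcr G := by
      have : pairCount E Crossing = Tcr.card / 2 := by rw [pairCount, hTcr_eq]
      rw [hcross] at this
      obtain ⟨t, ht⟩ := heven
      omega
    -- Step 4 : sharing pairs
    have hsh : Tsh.card ≤ ∑ v : V, G.degree v * (G.degree v - 1) := by
      set Sg := Finset.univ.sigma (fun v : V => (G.incidenceFinset v).offDiag) with hSg
      set φ : (Σ _ : V, Sym2 V × Sym2 V) → Sym2 Pt × Sym2 Pt :=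
        fun x => (Sym2.map f x.2.1, Sym2.map f x.2.2) with hφ
      have hsub : Tsh ⊆ Sg.image φ := by
        rintro ⟨e, g⟩ hq
        rw [hTsh, Finset.mem_filter, hT, Finset.mem_filter, Finset.mem_product] at hq
        obtain ⟨⟨⟨heE, hgE⟩, hneq, _⟩, p, hpe, hpg⟩ := hq
        rw [hE, geomEdges, Finset.mem_image] at heE hgE
        obtain ⟨e₀, he₀, rfl⟩ := heE
        obtain ⟨g₀, hg₀, rfl⟩ := hgE
        obtain ⟨v, hv, hvp⟩ := Sym2.mem_map.1 hpe
        obtain ⟨w, hw, hwp⟩ := Sym2.mem_map.1 hpg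
        have hvw : v = w := hf.1 (hvp.trans hwp.symm)
        subst hvw
        refine Finset.mem_image.2 ⟨⟨v, (e₀, g₀)⟩, ?_, rfl⟩
        rw [hSg, Finset.mem_sigma]
        refine ⟨Finset.mem_univ _, Finset.mem_offDiag.2 ⟨?_, ?_, ?_⟩⟩
        · rw [SimpleGraph.mem_incidenceFinset]
          exact ⟨SimpleGraph.mem_edgeFinset.1 he₀, hv⟩
        · rw [SimpleGraph.mem_incidenceFinset]
          exact ⟨SimpleGraph.mem_edgeFinset.1 hg₀, hw⟩
        · exact fun h => hneq (congrArg (Sym2.map f) h)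
      calc Tsh.card ≤ (Sg.image φ).card := Finset.card_le_card hsub
        _ ≤ Sg.card := Finset.card_image_le
        _ = ∑ v : V, ((G.incidenceFinset v).offDiag).card := Finset.card_sigma _ _
        _ = ∑ v : V, G.degree v * (G.degree v - 1) := by
            apply Finset.sum_congr rfl
            intro v _
            rw [Finset.offDiag_card, SimpleGraph.card_incidenceFinset_eq_degree]
            cases h : G.degree v with
            | zero => simp
            | succ n => simp [Nat.succ_sub_one, Nat.mul_sub, Nat.mul_succ]
    -- put everything together
    have hsum : ∑ v : V, G.degree v * (G.degree v - 1)
        = 2 * ∑ v : V, (G.degree v).choose 2 := by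
      rw [Finset.mul_sum]
      exact Finset.sum_congr rfl fun v _ => (two_mul_choose_two _).symm
    calc k * (k - 1) ≤ T.card := hkk
      _ = Tsh.card + Tcr.card := hsplit.symm
      _ ≤ (2 * ∑ v : V, (G.degree v).choose 2) + 2 * rcr G := by
          rw [← hsum, ← hcr]; exact Nat.add_le_add_right hsh _
      _ = 2 * M := by rw [hM]; ring
  -- final arithmetic
  have hfloor : (k : ℝ) ≤ (1 + Real.sqrt (1 + 8 * (M : ℝ))) / 2 := by
    have hsq0 : (0:ℝ) ≤ 1 + 8 * (M : ℝ) := by positivity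
    rcases Nat.eq_zero_or_pos k with h0 | hpos
    · rw [h0]
      have := Real.sqrt_nonneg (1 + 8 * (M : ℝ))
      push_cast
      linarith
    · have hcast : (k : ℝ) * ((k : ℝ) - 1) ≤ 2 * (M : ℝ) := by
        have := key
        have h1 : ((k * (k - 1) : ℕ) : ℝ) ≤ ((2 * M : ℕ) : ℝ) := by exact_mod_cast this
        rwa [Nat.cast_mul, Nat.cast_sub hpos, Nat.cast_mul, Nat.cast_ofNat,
          Nat.cast_one] at h1
      have hx0 : (0:ℝ) ≤ 2 * (k : ℝ) - 1 := by
        have : (1:ℝ) ≤ (k : ℝ) := by exact_mod_cast hpos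
        linarith
      have h1 : 2 * (k : ℝ) - 1 ≤ Real.sqrt (1 + 8 * (M : ℝ)) := by
        rw [Real.le_sqrt hx0 hsq0]
        nlinarith
      linarith
  exact Nat.le_floor hfloor
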